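/- Fix m ≥ 1 and let f₀ : ℕ → ℚ be the sequence f₀(j) = j for j ≥ 1. Then for every n ≥ 1, the m-th invert transform of f₀ satisfies (𝒴^m f₀)(n) = Σ_{k=1}^{n} C(n + k − 1, n − k) · m^(k−1). (For n > 1 this number counts the words of length n − 1 over the alphabet {0, 1, …, m+1} that avoid the pattern 01.) -/

import Mathlib

/-- The invert transform of a sequence `x : ℕ → ℚ` (indexed from 1, `x 0` ignored):
`(𝒴x)(0) = 0` and `(𝒴x)(n) = x n + ∑_{j=1}^{n-1} x j * (𝒴x)(n-j)` for `n ≥ 1`. -/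
def invert (x : ℕ → ℚ) : ℕ → ℚ
  | 0 => 0
  | n + 1 => x (n + 1) + ∑ j ∈ Finset.range n, x (j + 1) * invert x (n - j)
  termination_by n => n
  decreasing_by omega

/-- The partial Bell polynomial `B_{n,k}(z₁, z₂, …)`, evaluated at a sequence of rationals
`z` (indexed from 1, `z 0` ignored): the sum over all finitely supported `α : ℕ → ℕ` with
`α 0 = 0`, `∑ i, α i = k` and `∑ i, i * α i = n` of `(n! / ∏ i, (α i)!) * ∏ i (z i / i!)^(α i)`. -/
def partialBell (n k : ℕ) (z : ℕ → ℚ) : ℚ :=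
  ∑ α ∈ ((Finset.range (n + 1)).finsuppAntidiag k).filter
      (fun α => (∑ i ∈ Finset.range (n + 1), i * α i) = n ∧ α 0 = 0),
    ((n.factorial : ℚ) / ∏ i ∈ Finset.range (n + 1), ((α i).factorial : ℚ)) *
      ∏ i ∈ Finset.range (n + 1), (z i / (i.factorial : ℚ)) ^ α i

open Finset PowerSeries

/-- The target sequence, rewritten with `C(n+k, 2k+1)` so that out-of-range terms vanish. -/
def S (m n : ℕ) : ℚ := ∑ k ∈ Finset.range n, ((n + k).choose (2 * k + 1) : ℚ) * (m : ℚ) ^ k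

lemma S_eq (m n N : ℕ) (h : n ≤ N) :
    S m n = ∑ k ∈ Finset.range N, ((n + k).choose (2 * k + 1) : ℚ) * (m : ℚ) ^ k := by
  rw [S]
  apply Finset.sum_subset (Finset.range_subset_range.2 h)
  intro k hk hk'
  have hlt : n + k < 2 * k + 1 := by
    simp only [Finset.mem_range, not_lt] at hk'
    omega
  rw [Nat.choose_eq_zero_of_lt hlt]
  simp

lemma pascal2 (a j : ℕ) :
    (a + 2).choose (j + 2) + a.choose (j + 2)
      = 2 * ((a + 1).choose (j + 2)) + a.choose j := by
  simp only [Nat.choose_succ_succ]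
  ring

lemma pascalQ (n k : ℕ) :
    ((n + 3 + k).choose (2 * k + 3) : ℚ) + ((n + 1 + k).choose (2 * k + 3) : ℚ)
      = ((n + 1 + k).choose (2 * k + 1) : ℚ) + 2 * ((n + 2 + k).choose (2 * k + 3) : ℚ) := by
  have h := pascal2 (n + 1 + k) (2 * k + 1)
  have e1 : n + 1 + k + 2 = n + 3 + k := by ring
  have e2 : 2 * k + 1 + 2 = 2 * k + 3 := by ring
  have e3 : n + 1 + k + 1 = n + 2 + k := by ring
  rw [e1, e2, e3] at h
  exact_mod_cast h.trans (Nat.add_comm _ _)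

lemma S_rec (m n : ℕ) : S m (n + 2) = ((m : ℚ) + 2) * S m (n + 1) - S m n := by
  have hA : S m (n + 2)
      = (∑ k ∈ Finset.range (n + 1),
          ((n + 3 + k).choose (2 * k + 3) : ℚ) * (m : ℚ) ^ (k + 1)) + ((n : ℚ) + 2) := by
    rw [S, Finset.sum_range_succ']
    congr 1
    · refine Finset.sum_congr rfl fun k _ => ?_
      have e1 : n + 2 + (k + 1) = n + 3 + k := by ring
      have e2 : 2 * (k + 1) + 1 = 2 * k + 3 := by ring
      rw [e1, e2]
    · simp [Nat.choose_one_right]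
  have hB : S m (n + 1)
      = (∑ k ∈ Finset.range (n + 1),
          ((n + 2 + k).choose (2 * k + 3) : ℚ) * (m : ℚ) ^ (k + 1)) + ((n : ℚ) + 1) := by
    rw [S_eq m (n + 1) (n + 2) (by omega), Finset.sum_range_succ']
    congr 1
    · refine Finset.sum_congr rfl fun k _ => ?_
      have e1 : n + 1 + (k + 1) = n + 2 + k := by ring
      have e2 : 2 * (k + 1) + 1 = 2 * k + 3 := by ring
      rw [e1, e2]
    · simp [Nat.choose_one_right]
  have hC : S m n
      = (∑ k ∈ Finset.range (n + 1),
          ((n + 1 + k).choose (2 * k + 3) : ℚ) * (m : ℚ) ^ (k + 1)) + (n : ℚ) := by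
    rw [S_eq m n (n + 2) (by omega), Finset.sum_range_succ']
    congr 1
    · refine Finset.sum_congr rfl fun k _ => ?_
      have e1 : n + (k + 1) = n + 1 + k := by ring
      have e2 : 2 * (k + 1) + 1 = 2 * k + 3 := by ring
      rw [e1, e2]
    · simp [Nat.choose_one_right]
  have hmB : (m : ℚ) * S m (n + 1)
      = ∑ k ∈ Finset.range (n + 1),
          ((n + 1 + k).choose (2 * k + 1) : ℚ) * (m : ℚ) ^ (k + 1) := by
    rw [S, Finset.mul_sum]
    refine Finset.sum_congr rfl fun k _ => ?_
    ring
  have hsum :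
      (∑ k ∈ Finset.range (n + 1), ((n + 3 + k).choose (2 * k + 3) : ℚ) * (m : ℚ) ^ (k + 1))
        + (∑ k ∈ Finset.range (n + 1), ((n + 1 + k).choose (2 * k + 3) : ℚ) * (m : ℚ) ^ (k + 1))
      = (∑ k ∈ Finset.range (n + 1), ((n + 1 + k).choose (2 * k + 1) : ℚ) * (m : ℚ) ^ (k + 1))
        + 2 * ∑ k ∈ Finset.range (n + 1),
            ((n + 2 + k).choose (2 * k + 3) : ℚ) * (m : ℚ) ^ (k + 1) := by
    rw [Finset.mul_sum, ← Finset.sum_add_distrib, ← Finset.sum_add_distrib]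
    refine Finset.sum_congr rfl fun k _ => ?_
    have h := pascalQ n k
    linear_combination (m : ℚ) ^ (k + 1) * h
  have hexp : ((m : ℚ) + 2) * S m (n + 1) = (m : ℚ) * S m (n + 1) + 2 * S m (n + 1) := by ring
  rw [hA, hexp, hmB, hB, hC]
  linarith [hsum]

/-- Denominator series `1 - (m+2)t + t²`. -/
noncomputable def Dps (m : ℕ) : PowerSeries ℚ :=
  1 - PowerSeries.C ((m : ℚ) + 2) * PowerSeries.X + PowerSeries.X ^ 2

lemma S_zero (m : ℕ) : S m 0 = 0 := by simp [S]

lemma S_one (m : ℕ) : S m 1 = 1 := by simp [S]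

lemma Sps_mul_D (m : ℕ) : PowerSeries.mk (S m) * Dps m = PowerSeries.X := by
  have expand : PowerSeries.mk (S m) * Dps m
      = PowerSeries.mk (S m)
        - PowerSeries.C ((m : ℚ) + 2) * (PowerSeries.mk (S m) * PowerSeries.X)
        + PowerSeries.mk (S m) * PowerSeries.X ^ 2 := by
    rw [Dps]; ring
  rw [expand]
  ext n
  rw [map_add, map_sub, PowerSeries.coeff_C_mul]
  match n with
  | 0 =>
    have h1 : (PowerSeries.coeff 0) (PowerSeries.mk (S m) * PowerSeries.X) = 0 := by
      rw [PowerSeries.coeff_zero_eq_constantCoeff, map_mul]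
      simp
    have h2 : (PowerSeries.coeff 0) (PowerSeries.mk (S m) * PowerSeries.X ^ 2) = 0 := by
      rw [PowerSeries.coeff_mul_X_pow']
      simp
    rw [h1, h2]
    simp [S_zero]
  | 1 =>
    have h1 : (PowerSeries.coeff 1) (PowerSeries.mk (S m) * PowerSeries.X)
        = S m 0 := by
      rw [PowerSeries.coeff_succ_mul_X, PowerSeries.coeff_mk]
    have h2 : (PowerSeries.coeff 1) (PowerSeries.mk (S m) * PowerSeries.X ^ 2) = 0 := by
      rw [PowerSeries.coeff_mul_X_pow']
      simp
    rw [h1, h2, PowerSeries.coeff_mk, S_zero, S_one]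
    simp
  | (n + 2) =>
    have h1 : (PowerSeries.coeff (n + 2)) (PowerSeries.mk (S m) * PowerSeries.X)
        = S m (n + 1) := by
      rw [PowerSeries.coeff_succ_mul_X, PowerSeries.coeff_mk]
    have h2 : (PowerSeries.coeff (n + 2)) (PowerSeries.mk (S m) * PowerSeries.X ^ 2)
        = S m n := by
      rw [PowerSeries.coeff_mul_X_pow, PowerSeries.coeff_mk]
    rw [h1, h2, PowerSeries.coeff_mk, PowerSeries.coeff_X]
    have := S_rec m n
    have hne : ¬ (n + 2 = 1) := by omega
    rw [if_neg hne]
    linarith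

lemma invert_ps (x : ℕ → ℚ) :
    PowerSeries.mk (invert x)
      = PowerSeries.mk (fun n => if n = 0 then 0 else x n)
        + PowerSeries.mk (fun n => if n = 0 then 0 else x n) * PowerSeries.mk (invert x) := by
  ext n
  rw [map_add, PowerSeries.coeff_mk, PowerSeries.coeff_mul,
    Finset.Nat.sum_antidiagonal_eq_sum_range_succ_mk]
  match n with
  | 0 => simp [invert]
  | (n + 1) =>
    rw [Finset.sum_range_succ']
    simp only [PowerSeries.coeff_mk, Nat.succ_ne_zero, if_false, if_pos rfl, zero_mul,
      add_zero, Nat.succ_sub_succ]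
    rw [invert, Finset.sum_range_succ, Nat.sub_self]
    have h0 : invert x 0 = 0 := by simp [invert]
    rw [h0, mul_zero, add_zero]
    simp only [if_true, zero_mul, add_zero]

lemma D_succ (m : ℕ) : Dps (m + 1) = Dps m - PowerSeries.X := by
  have h : (((m + 1 : ℕ) : ℚ) + 2) = ((m : ℚ) + 2) + 1 := by push_cast; ring
  rw [Dps, Dps, h, map_add, map_one]
  ring

lemma D_ne_zero (m : ℕ) : Dps m ≠ 0 := by
  intro h
  have : PowerSeries.constantCoeff (Dps m) = 1 := by
    rw [Dps]
    simp
  rw [h] at this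
  simp at this

lemma step (m : ℕ) (x : ℕ → ℚ)
    (hx : PowerSeries.mk (fun n => if n = 0 then 0 else x n) = PowerSeries.mk (S m)) :
    PowerSeries.mk (invert x) = PowerSeries.mk (S (m + 1)) := by
  have h1 := invert_ps x
  rw [hx] at h1
  have h2 : PowerSeries.mk (S m) * Dps m = PowerSeries.X := Sps_mul_D m
  have h3 : PowerSeries.mk (S (m + 1)) * Dps (m + 1) = PowerSeries.X := Sps_mul_D (m + 1)
  have h4 : PowerSeries.mk (invert x) * Dps (m + 1) = PowerSeries.X := by
    rw [D_succ]
    linear_combination (Dps m) * h1 + (1 + PowerSeries.mk (invert x)) * h2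
  exact mul_right_cancel₀ (D_ne_zero (m + 1)) (h4.trans h3.symm)

lemma iter_eq (f₀ : ℕ → ℚ) (hf : ∀ j, 1 ≤ j → f₀ j = (j : ℚ)) (m : ℕ) :
    PowerSeries.mk (fun n => if n = 0 then 0 else (invert^[m] f₀) n)
      = PowerSeries.mk (S m) := by
  induction m with
  | zero =>
    ext n
    simp only [Function.iterate_zero, id_eq, PowerSeries.coeff_mk]
    match n with
    | 0 => simp [S_zero]
    | (n + 1) =>
      rw [if_neg (by omega), hf (n + 1) (by omega), S]
      rw [Finset.sum_eq_single 0]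
      · simp [Nat.choose_one_right]
      · intro k _ hk
        have : ((0 : ℕ) : ℚ) ^ k = 0 := by
          rw [Nat.cast_zero, zero_pow hk]
        rw [this, mul_zero]
      · intro h
        exact absurd (Finset.mem_range.2 (by omega)) h
  | succ m ih =>
    rw [Function.iterate_succ_apply']
    have hzero : (fun n => if n = 0 then (0 : ℚ) else invert (invert^[m] f₀) n)
        = invert (invert^[m] f₀) := by
      funext n
      match n with
      | 0 => simp [invert]
      | (n + 1) => simp
    rw [hzero]
    exact step m (invert^[m] f₀) ih

lemma Icc_eq (m n : ℕ) :
    ∑ k ∈ Finset.Icc 1 n, ((n + k - 1).choose (n - k) : ℚ) * (m : ℚ) ^ (k - 1) = S m n := by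
  rw [S, ← Finset.Ico_add_one_right_eq_Icc, Finset.sum_Ico_eq_sum_range]
  have hr : n + 1 - 1 = n := by omega
  rw [hr]
  refine Finset.sum_congr rfl fun k hk => ?_
  have hk' : k < n := Finset.mem_range.1 hk
  have e1 : n + (1 + k) - 1 = n + k := by omega
  have e2 : 1 + k - 1 = k := by omega
  rw [e1, e2]
  congr 2
  have e3 : n - (1 + k) = (n + k) - (2 * k + 1) := by omega
  rw [e3, Nat.choose_symm (by omega)]

/-- For `f₀ j = j` and `m ≥ 1`:
`(𝒴^m f₀)(n) = ∑_{k=1}^{n} C(n+k-1, n-k) m^(k-1)`,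
which for `n > 1` counts the `01`-avoiding words of length `n-1` over `{0,…,m+1}`. -/
theorem stmt_12 (m : ℕ) (hm : 1 ≤ m) (f₀ : ℕ → ℚ)
    (hf : ∀ j, 1 ≤ j → f₀ j = (j : ℚ)) (n : ℕ) (hn : 1 ≤ n) :
    (invert^[m] f₀) n
      = ∑ k ∈ Finset.Icc 1 n, ((n + k - 1).choose (n - k) : ℚ) * (m : ℚ) ^ (k - 1) := by
  have key := iter_eq f₀ hf m
  have hc := congrArg (PowerSeries.coeff n) key
  simp only [PowerSeries.coeff_mk] at hc
  rw [if_neg (by omega)] at hc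
  rw [hc, Icc_eq]
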